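/- Let m ≥ 1 be a natural number, let a be a real number with 0 ≤ a < 1, and set s = 2am/(1-a). Let N ≥ 1 be a natural number and let k₁, …, k_N be positive real numbers (vertex degrees) with Σ_{j=1}^N k_j = 2mN. Then for every index i, the Pennock attachment probability equals the L-graph attachment probability: a·(1/N) + (1-a)·k_i/(2mN) = (k_i + s)/(Σ_{j=1}^N (k_j + s)), and both are equal to (2am + k_i(1-a))/(2mN). (Hence the growth rules of the Pennock graph (m,a) and the L-graph (m, 2am/(1-a)) coincide, so every P-graph is equivalent to a certain L-graph.) -/

import Mathlib

/-- With `s = 2am/(1-a)` and degrees summing to `2mN`, the Pennock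
attachment probability equals the L-graph attachment probability, and both equal
`(2am + kᵢ(1-a))/(2mN)`. -/
theorem pennock_L_attachment_rule_equiv (m : ℕ) (hm : 1 ≤ m) (a : ℝ) (ha0 : 0 ≤ a)
    (ha1 : a < 1) (s : ℝ) (hs : s = 2 * a * m / (1 - a)) (N : ℕ) (hN : 1 ≤ N)
    (k : Fin N → ℝ) (hk : ∀ j, 0 < k j) (hsum : ∑ j, k j = 2 * m * N) :
    ∀ i : Fin N,
      a * (1 / (N : ℝ)) + (1 - a) * k i / (2 * m * N) = (k i + s) / (∑ j, (k j + s)) ∧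
      a * (1 / (N : ℝ)) + (1 - a) * k i / (2 * m * N) =
        (2 * a * m + k i * (1 - a)) / (2 * m * N) := by
  intro i
  have hm0 : (0:ℝ) < m := by exact_mod_cast hm
  have hN0 : (0:ℝ) < N := by exact_mod_cast hN
  have h1a : (0:ℝ) < 1 - a := by linarith
  have hssum : ∑ j, (k j + s) = 2 * m * N + N * s := by
    rw [Finset.sum_add_distrib, hsum, Finset.sum_const, Finset.card_univ,
      Fintype.card_fin, nsmul_eq_mul]
  have h2 : a * (1 / (N : ℝ)) + (1 - a) * k i / (2 * m * N) =
      (2 * a * m + k i * (1 - a)) / (2 * m * N) := by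
    field_simp
  refine ⟨?_, h2⟩
  rw [h2, hssum, hs]
  rw [div_eq_div_iff (by positivity) (by positivity)]
  field_simp
  ring
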